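/- Let T = ℕ₀ rooted at 0 with n ∼ m iff |n−m| = 1, and φ(m) = 2m + 1. Then every λ with 0 < |λ| < 2 is an eigenvalue of C_φ on Lip_0(T); an eigenfunction is f(m) = (m+1)^μ where 2^μ = λ. -/

import Mathlib

/-- `Lip₀(ℕ₀)`: bounded successive differences tending to `0`. -/
def MemLip0N (f : ℕ → ℂ) : Prop :=
  (∃ C : ℝ, ∀ n : ℕ, ‖f (n + 1) - f n‖ ≤ C) ∧
  Filter.Tendsto (fun n : ℕ => ‖f (n + 1) - f n‖) Filter.atTop (nhds 0)

/-- For the tree `ℕ₀` rooted at `0` and `φ(m) = 2m + 1`, every `λ` with `0 < |λ| < 2` is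
an eigenvalue of `C_φ` on `Lip₀`, with eigenfunction `f(m) = (m+1)^μ` whenever `2^μ = λ`. -/
theorem eigenvalues_of_doubling (φ : ℕ → ℕ) (hφ : ∀ m : ℕ, φ m = 2 * m + 1)
    (lam : ℂ) (h0 : 0 < ‖lam‖) (h2 : ‖lam‖ < 2)
    (μ : ℂ) (hμ : (2 : ℂ) ^ μ = lam) :
    MemLip0N (fun m : ℕ => Complex.exp (μ * Complex.log ((m : ℂ) + 1))) ∧
    (fun m : ℕ => Complex.exp (μ * Complex.log ((m : ℂ) + 1))) ≠ 0 ∧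
    (fun m : ℕ => Complex.exp (μ * Complex.log ((m : ℂ) + 1))) ∘ φ =
      lam • fun m : ℕ => Complex.exp (μ * Complex.log ((m : ℂ) + 1)) := by
  set f : ℕ → ℂ := fun m : ℕ => Complex.exp (μ * Complex.log ((m : ℂ) + 1)) with hf
  set s : ℝ := μ.re with hsdef
  -- s < 1
  have habs : ‖lam‖ = (2 : ℝ) ^ s := by
    rw [← hμ, show ((2 : ℂ)) = ((2 : ℝ) : ℂ) by norm_num,
      Complex.norm_cpow_eq_rpow_re_of_pos (by norm_num)]
  have hs : s < 1 := by
    have h21 : ((2 : ℝ) ^ s) < (2 : ℝ) ^ (1 : ℝ) := by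
      rw [Real.rpow_one]; rw [habs] at h2; exact h2
    exact (Real.rpow_lt_rpow_left_iff (by norm_num)).1 h21
  -- complex log on positive naturals
  have hlog : ∀ n : ℕ, Complex.log ((n : ℂ) + 1) = (Real.log ((n : ℝ) + 1) : ℂ) := by
    intro n
    rw [show ((n : ℂ) + 1) = (((n : ℝ) + 1 : ℝ) : ℂ) by push_cast; ring,
      Complex.ofReal_log (by positivity)]
  -- |f n| = (n+1)^s
  have habsf : ∀ n : ℕ, ‖f n‖ = ((n : ℝ) + 1) ^ s := by
    intro n
    simp only [hf, Complex.norm_exp, hlog]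
    rw [Real.rpow_def_of_pos (by positivity)]
    congr 1
    simp [Complex.mul_re]
    ring
  -- tendsto of the differences
  have htend : Filter.Tendsto (fun n : ℕ => ‖f (n + 1) - f n‖)
      Filter.atTop (nhds 0) := by
    have hbound : ∀ᶠ n : ℕ in Filter.atTop,
        ‖f (n + 1) - f n‖ ≤ 2 * ‖μ‖ * ((n : ℝ) + 1) ^ (s - 1) := by
      filter_upwards [Filter.eventually_atTop.2
        ⟨Nat.ceil (‖μ‖), fun n hn => hn⟩] with n hn
      have hn' : ‖μ‖ ≤ (n : ℝ) + 1 := by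
        calc ‖μ‖ ≤ Nat.ceil (‖μ‖) := Nat.le_ceil _
          _ ≤ (n : ℝ) := by exact_mod_cast hn
          _ ≤ (n : ℝ) + 1 := by linarith
      have hpos : (0 : ℝ) < (n : ℝ) + 1 := by positivity
      set r : ℝ := Real.log ((n : ℝ) + 2) - Real.log ((n : ℝ) + 1) with hr
      have hr0 : 0 ≤ r := by
        have := Real.log_le_log (by positivity : (0:ℝ) < (n:ℝ)+1)
          (by linarith : (n : ℝ) + 1 ≤ (n : ℝ) + 2)
        linarith
      have hrle : r ≤ 1 / ((n : ℝ) + 1) := by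
        have hd : r = Real.log (((n : ℝ) + 2) / ((n : ℝ) + 1)) := by
          rw [Real.log_div (by positivity) (by positivity)]
        have := Real.log_le_sub_one_of_pos
          (show (0:ℝ) < ((n : ℝ) + 2) / ((n : ℝ) + 1) by positivity)
        rw [hd]
        have : ((n : ℝ) + 2) / ((n : ℝ) + 1) - 1 = 1 / ((n : ℝ) + 1) := by
          field_simp
          ring_nf
        linarith [Real.log_le_sub_one_of_pos
          (show (0:ℝ) < ((n : ℝ) + 2) / ((n : ℝ) + 1) by positivity), this]
      -- decomposition
      have hdecomp : f (n + 1) - f n = f n * (Complex.exp (μ * (r : ℂ)) - 1) := by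
        simp only [hf]
        rw [mul_sub, mul_one, ← Complex.exp_add, ← mul_add]
        congr 2
        rw [hlog, hlog, hr]
        push_cast
        ring
      have hzabs : ‖μ * (r : ℂ)‖ = ‖μ‖ * r := by
        rw [norm_mul, Complex.norm_real, Real.norm_eq_abs, abs_of_nonneg hr0]
      have hz1 : ‖μ * (r : ℂ)‖ ≤ 1 := by
        rw [hzabs]
        calc ‖μ‖ * r ≤ ((n : ℝ) + 1) * (1 / ((n : ℝ) + 1)) := by
              apply mul_le_mul hn' hrle hr0 (by positivity)
          _ = 1 := by field_simp
      calc ‖f (n + 1) - f n‖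
          = ‖f n‖ * ‖Complex.exp (μ * (r : ℂ)) - 1‖ := by
            rw [hdecomp, norm_mul]
        _ ≤ ‖f n‖ * (2 * ‖μ * (r : ℂ)‖) := by
            apply mul_le_mul_of_nonneg_left (Complex.norm_exp_sub_one_le hz1)
              (norm_nonneg _)
        _ ≤ ((n : ℝ) + 1) ^ s * (2 * (‖μ‖ * (1 / ((n : ℝ) + 1)))) := by
            rw [habsf, hzabs]
            apply mul_le_mul_of_nonneg_left _ (by positivity)
            have := mul_le_mul_of_nonneg_left hrle (norm_nonneg μ)
            linarith
        _ = 2 * ‖μ‖ * ((n : ℝ) + 1) ^ (s - 1) := by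
            rw [Real.rpow_sub hpos, Real.rpow_one]
            field_simp
    have hmajor : Filter.Tendsto (fun n : ℕ => 2 * ‖μ‖ * ((n : ℝ) + 1) ^ (s - 1))
        Filter.atTop (nhds 0) := by
      have h1 : Filter.Tendsto (fun n : ℕ => ((n : ℝ) + 1)) Filter.atTop Filter.atTop :=
        Filter.tendsto_atTop_add_const_right _ 1 tendsto_natCast_atTop_atTop
      have h2' : Filter.Tendsto (fun x : ℝ => x ^ (s - 1)) Filter.atTop (nhds 0) := by
        have := tendsto_rpow_neg_atTop (show (0:ℝ) < 1 - s by linarith)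
        simpa [neg_sub] using this
      have := (h2'.comp h1).const_mul (2 * ‖μ‖)
      simpa using this
    exact squeeze_zero' (Filter.Eventually.of_forall fun n => norm_nonneg _)
      hbound hmajor
  refine ⟨⟨?_, htend⟩, ?_, ?_⟩
  · -- boundedness from convergence
    obtain ⟨C, hC⟩ := htend.bddAbove_range
    exact ⟨C, fun n => hC ⟨n, rfl⟩⟩
  · -- f ≠ 0
    intro h
    have := congrFun h 0
    simp only [hf, Pi.zero_apply] at this
    exact Complex.exp_ne_zero _ this
  · -- functional equation
    funext m
    simp only [Function.comp_apply, Pi.smul_apply, smul_eq_mul, hf, hφ m]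
    have hcast : ((2 * m + 1 : ℕ) : ℂ) + 1 = (((2 * ((m : ℝ) + 1)) : ℝ) : ℂ) := by
      push_cast; ring
    rw [hcast, ← Complex.ofReal_log (by positivity : (0:ℝ) ≤ 2 * ((m:ℝ)+1)),
      Real.log_mul (by norm_num) (by positivity), ← hμ]
    rw [Complex.cpow_def_of_ne_zero (by norm_num),
      show ((2 : ℂ)) = ((2 : ℝ) : ℂ) by norm_num, ← Complex.ofReal_log (by norm_num : (0:ℝ) ≤ 2)]
    rw [hlog, ← Complex.exp_add]
    push_cast
    ring_nf
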